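/- Let R and S be integral domains with R ⊆ S. Suppose there exists a nonzero element a ∈ R such that the localizations R_a and S_a are equal (as subrings of the fraction field of S) and aS ∩ R = aR. Then R = S. -/
import Mathlib


/-- If `R ⊆ S` are domains, `a ∈ R` nonzero, `R_a = S_a` (every element of `S`
becomes an element of `R` after multiplying by a power of `a`), and
`aS ∩ R = aR`, then `R = S`. -/
theorem stmt_0 {S : Type*} [CommRing S] [IsDomain S] (R : Subring S) (a : S)
    (haR : a ∈ R) (ha : a ≠ 0)
    (hloc : ∀ s : S, ∃ n : ℕ, a ^ n * s ∈ R)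
    (hint : ∀ r : S, r ∈ R → (∃ s : S, r = a * s) → ∃ r' ∈ R, r = a * r') :
    ∀ s : S, s ∈ R := by
  have key : ∀ n : ℕ, ∀ s : S, a ^ n * s ∈ R → s ∈ R := by
    intro n
    induction n with
    | zero => intro s h; simpa using h
    | succ k ih =>
      intro s h
      obtain ⟨r', hr', heq⟩ := hint (a ^ (k + 1) * s) h
        ⟨a ^ k * s, by ring⟩
      have : a ^ k * s = r' := by
        apply mul_left_cancel₀ ha
        calc a * (a ^ k * s) = a ^ (k + 1) * s := by ring
          _ = a * r' := heq
      exact ih s (this ▸ hr')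
  intro s
  obtain ⟨n, hn⟩ := hloc s
  exact key n s hn
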